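/- Let n ≥ 1 be an integer and m₁, m₂ coprime positive integers with m₁ ≠ m₂; set d := (m₁−m₂)/(m₁+m₂), M := (n+1)(m₁+m₂), F_n := (y + d x^{n+1}, (n+1)x^{2n+1} + (n+1)d x^n y), and I_M := (y − x^{n+1})^{m₁}(y + x^{n+1})^{m₂}. Let k ≥ n be an integer and let p ∈ ℝ[x,y] be quasi-homogeneous of type t = (1,n+1) and degree k. Then there exists a quasi-homogeneous polynomial q of type t and degree k + M − n with ∇q·F_n = p·I_M if and only if there exists a quasi-homogeneous polynomial q̃ of type t and degree k − n with ∇q̃·F_n = p. -/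

import Mathlib

open MvPolynomial

/-- A polynomial in two variables is quasi-homogeneous of type `(t₁,t₂)` and
degree `k` if every monomial `x^a y^b` occurring in it satisfies `t₁a + t₂b = k`. -/
def IsQH (t₁ t₂ k : ℕ) (p : MvPolynomial (Fin 2) ℝ) : Prop :=
  ∀ m ∈ p.support, t₁ * m 0 + t₂ * m 1 = k

/-- `∇p · (P,Q)` for a planar polynomial vector field `(P,Q)`. -/
noncomputable def gradDot (p P Q : MvPolynomial (Fin 2) ℝ) : MvPolynomial (Fin 2) ℝ :=
  pderiv 0 p * P + pderiv 1 p * Q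

namespace QHaux

def wt (n : ℕ) : Fin 2 → ℕ := ![1, n+1]

lemma weight_two (w : Fin 2 → ℕ) (d : Fin 2 →₀ ℕ) :
    Finsupp.weight w d = d 0 * w 0 + d 1 * w 1 := by
  rw [Finsupp.weight_apply, Finsupp.sum_fintype] <;> simp [Fin.sum_univ_two, mul_comm]

lemma isQH_iff (n k : ℕ) (p : MvPolynomial (Fin 2) ℝ) :
    IsQH 1 (n+1) k p ↔ p.IsWeightedHomogeneous (wt n) k := by
  constructor
  · intro h d hd
    rw [weight_two]
    have := h d (mem_support_iff.mpr hd)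
    simp [wt, mul_comm] at this ⊢
    omega
  · intro h d hd
    have := h (mem_support_iff.mp hd)
    rw [weight_two] at this
    simp [wt, mul_comm] at this
    omega

lemma X_mul_pderiv_monomial {i : Fin 2} (s : Fin 2 →₀ ℕ) (a : ℝ) :
    X i * pderiv i (monomial s a) = monomial s (a * (s i : ℝ)) := by
  rcases Nat.eq_zero_or_pos (s i) with h | h
  · simp [pderiv_monomial, h]
  · have hs : Finsupp.single i 1 + (s - Finsupp.single i 1) = s := by
      ext j
      rcases eq_or_ne j i with rfl | hj
      · simp; omega
      · simp [Finsupp.single_apply, Ne.symm hj]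
    rw [pderiv_monomial, X, monomial_mul, one_mul, hs]

lemma euler {n D : ℕ} {p : MvPolynomial (Fin 2) ℝ}
    (hp : p.IsWeightedHomogeneous (wt n) D) :
    X 0 * pderiv 0 p + C ((n : ℝ)+1) * (X 1 * pderiv 1 p) = C (D : ℝ) * p := by
  conv_lhs => rw [p.as_sum]
  conv_rhs => rw [p.as_sum]
  rw [map_sum (pderiv 0), map_sum (pderiv 1), Finset.mul_sum, Finset.mul_sum,
    Finset.mul_sum, Finset.mul_sum, ← Finset.sum_add_distrib]
  refine Finset.sum_congr rfl fun v hv => ?_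
  rw [X_mul_pderiv_monomial, X_mul_pderiv_monomial, C_mul_monomial, C_mul_monomial,
    ← map_add]
  congr 1
  have h := hp (mem_support_iff.mp hv)
  rw [weight_two] at h
  simp only [wt] at h
  have : (D : ℝ) = v 0 + ((n : ℝ) + 1) * v 1 := by
    push_cast [← h]
    simp [Matrix.cons_val_zero, Matrix.cons_val_one]
    ring
  rw [this]; ring


lemma gradDot_mul (a b P Q : MvPolynomial (Fin 2) ℝ) :
    gradDot (a * b) P Q = a * gradDot b P Q + b * gradDot a P Q := by
  simp only [gradDot, pderiv_mul]; ring

lemma gradDot_pow_eigen {f K P Q : MvPolynomial (Fin 2) ℝ}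
    (hf : gradDot f P Q = K * f) (m : ℕ) :
    gradDot (f ^ m) P Q = C (m : ℝ) * K * (f ^ m) := by
  induction m with
  | zero => simp [gradDot]
  | succ m ih =>
      rw [pow_succ, gradDot_mul, hf, ih]
      rw [Nat.cast_add, Nat.cast_one, map_add, map_one]
      ring

lemma dvd_sub_aeval (u g : MvPolynomial (Fin 2) ℝ) :
    (X 1 - u) ∣ g - aeval ![X 0, u] g := by
  induction g using MvPolynomial.induction_on with
  | C a => simp [aeval_C, algebraMap_eq]
  | add p q hp hq =>
      have h : p + q - aeval ![X 0, u] (p + q)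
          = (p - aeval ![X 0, u] p) + (q - aeval ![X 0, u] q) := by
        rw [map_add]; ring
      rw [h]; exact dvd_add hp hq
  | mul_X p i hp =>
      have h : p * X i - aeval ![X 0, u] (p * X i)
          = (p - aeval ![X 0, u] p) * X i
            + aeval ![X 0, u] p * (X i - aeval (R := ℝ) ![X 0, u] (X i)) := by
        rw [map_mul]; ring
      rw [h]
      refine dvd_add (Dvd.dvd.mul_right hp _) (Dvd.dvd.mul_left ?_ _)
      fin_cases i
      · simp
      · simpa using dvd_refl (X 1 - u)

lemma dvd_iff_aeval (u g : MvPolynomial (Fin 2) ℝ) (hu : aeval ![X 0, u] u = u) :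
    (X 1 - u) ∣ g ↔ aeval ![X 0, u] g = 0 := by
  constructor
  · rintro ⟨t, rfl⟩
    have h : (aeval (R := ℝ) ![X 0, u]) (X 1 - u) = 0 := by
      rw [map_sub, aeval_X]
      simp only [Matrix.cons_val_one, Matrix.head_cons]
      rw [sub_eq_zero]
      exact hu.symm
    rw [map_mul, h, zero_mul]
  · intro h
    have h2 := dvd_sub_aeval u g
    rwa [h, sub_zero] at h2


lemma wh_cancel {w : Fin 2 → ℕ} {f h : MvPolynomial (Fin 2) ℝ} {a b : ℕ}
    (hf : f.IsWeightedHomogeneous w a) (hf0 : f ≠ 0)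
    (hfh : (f * h).IsWeightedHomogeneous w (a + b)) :
    h.IsWeightedHomogeneous w b := by
  have hfin : (Function.support fun m => weightedHomogeneousComponent w m h).Finite :=
    weightedHomogeneousComponent_finsupp h
  have hfin2 : (Function.support fun m => f * weightedHomogeneousComponent w m h).Finite := by
    apply hfin.subset
    intro m hm
    simp only [Function.mem_support] at hm ⊢
    intro h0
    exact hm (by rw [h0, mul_zero])
  have hr : f * h = ∑ᶠ m, f * weightedHomogeneousComponent w m h := by
    rw [← mul_finsum' _ _ hfin, sum_weightedHomogeneousComponent]
  have key : ∀ i : ℕ, i ≠ b → weightedHomogeneousComponent w i h = 0 := by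
    intro i hi
    by_contra hne
    have h1 : weightedHomogeneousComponent w (a + i) (f * h)
        = f * weightedHomogeneousComponent w i h := by
      rw [hr]
      rw [show (weightedHomogeneousComponent w (a+i))
            (∑ᶠ m, f * weightedHomogeneousComponent w m h)
          = ∑ᶠ m, (weightedHomogeneousComponent w (a+i))
            (f * weightedHomogeneousComponent w m h) from
        (weightedHomogeneousComponent w (a+i)).toAddMonoidHom.map_finsum hfin2]
      rw [finsum_eq_single _ i]
      · exact IsWeightedHomogeneous.weightedHomogeneousComponent_same
          (hf.mul (weightedHomogeneousComponent_isWeightedHomogeneous i h))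
      · intro j hj
        exact IsWeightedHomogeneous.weightedHomogeneousComponent_ne _
          (hf.mul (weightedHomogeneousComponent_isWeightedHomogeneous j h))
          (by intro hc; exact hj (by omega))
    have h2 : weightedHomogeneousComponent w (a + i) (f * h) = 0 :=
      IsWeightedHomogeneous.weightedHomogeneousComponent_ne _ hfh (by omega)
    rw [h2] at h1
    rcases mul_eq_zero.mp h1.symm with hc | hc
    · exact hf0 hc
    · exact hne hc
  have hh : h = weightedHomogeneousComponent w b h := by
    conv_lhs => rw [← sum_weightedHomogeneousComponent w h]
    exact finsum_eq_single _ b key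
  rw [hh]
  exact weightedHomogeneousComponent_isWeightedHomogeneous b h




lemma pderiv_X_pow (i : Fin 2) (m : ℕ) :
    pderiv i ((X i : MvPolynomial (Fin 2) ℝ) ^ m) = C (m : ℝ) * X i ^ (m-1) := by
  rcases Nat.eq_zero_or_pos m with rfl | hm
  · simp
  · rw [X_pow_eq_monomial, pderiv_monomial, X_pow_eq_monomial, C_mul_monomial]
    have : (Finsupp.single i m) - Finsupp.single i 1 = Finsupp.single i (m-1) := by
      ext j
      rcases eq_or_ne j i with rfl | hj
      · simp
      · simp [Finsupp.single_apply, Ne.symm hj]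
    rw [this]
    simp [mul_comm]

lemma pderiv_X_pow_ne {i j : Fin 2} (hij : j ≠ i) (m : ℕ) :
    pderiv i ((X j : MvPolynomial (Fin 2) ℝ) ^ m) = 0 := by
  rw [X_pow_eq_monomial, pderiv_monomial]
  simp [Finsupp.single_apply, Ne.symm hij, hij]

noncomputable def Pv (n : ℕ) (dd : ℝ) : MvPolynomial (Fin 2) ℝ :=
  X 1 + C dd * X 0 ^ (n+1)

noncomputable def Qv (n : ℕ) (dd : ℝ) : MvPolynomial (Fin 2) ℝ :=
  C ((n : ℝ)+1) * X 0 ^ (2*n+1) + C (((n : ℝ)+1) * dd) * X 0 ^ n * X 1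

lemma eig1 (n : ℕ) (dd : ℝ) :
    gradDot (X 1 - X 0 ^ (n+1)) (Pv n dd) (Qv n dd)
      = C (-(((n : ℝ)+1) * (1-dd))) * X 0 ^ n * (X 1 - X 0 ^ (n+1)) := by
  simp only [gradDot, Pv, Qv, map_sub, map_mul, map_add, map_neg, map_one,
    pderiv_X_pow, pderiv_X_pow_ne (show (0:Fin 2) ≠ 1 by decide),
    pderiv_X_pow_ne (show (1:Fin 2) ≠ 0 by decide),
    pderiv_X_self, pderiv_X_of_ne (show (1:Fin 2) ≠ 0 by decide),
    pderiv_X_of_ne (show (0:Fin 2) ≠ 1 by decide), Nat.add_sub_cancel, Nat.cast_add,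
    Nat.cast_one]
  ring

lemma eig2 (n : ℕ) (dd : ℝ) :
    gradDot (X 1 + X 0 ^ (n+1)) (Pv n dd) (Qv n dd)
      = C (((n : ℝ)+1) * (1+dd)) * X 0 ^ n * (X 1 + X 0 ^ (n+1)) := by
  simp only [gradDot, Pv, Qv, map_sub, map_mul, map_add, map_neg, map_one,
    pderiv_X_pow, pderiv_X_pow_ne (show (0:Fin 2) ≠ 1 by decide),
    pderiv_X_pow_ne (show (1:Fin 2) ≠ 0 by decide),
    pderiv_X_self, pderiv_X_of_ne (show (1:Fin 2) ≠ 0 by decide),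
    pderiv_X_of_ne (show (0:Fin 2) ≠ 1 by decide), Nat.add_sub_cancel, Nat.cast_add,
    Nat.cast_one]
  ring
lemma Sgrad (n D : ℕ) (dd e : ℝ) (he : e * e = 1) {h : MvPolynomial (Fin 2) ℝ}
    (hh : h.IsWeightedHomogeneous (wt n) D) :
    aeval (![X 0, C e * X 0 ^ (n+1)] : Fin 2 → MvPolynomial (Fin 2) ℝ)
        (gradDot h (Pv n dd) (Qv n dd))
      = C ((e+dd) * (D : ℝ)) * X 0 ^ n
        * aeval (![X 0, C e * X 0 ^ (n+1)] : Fin 2 → MvPolynomial (Fin 2) ℝ) h := by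
  have he' : (C e * C e : MvPolynomial (Fin 2) ℝ) = 1 := by
    rw [← map_mul, he, map_one]
  have hE := congrArg
    (aeval (![X 0, C e * X 0 ^ (n+1)] : Fin 2 → MvPolynomial (Fin 2) ℝ)) (euler hh)
  simp only [map_add, map_mul, map_pow, aeval_X, aeval_C, Matrix.cons_val_zero,
    Matrix.cons_val_one, Matrix.head_cons, algebraMap_eq] at hE
  simp only [gradDot, Pv, Qv, map_add, map_mul, map_pow, aeval_X, aeval_C,
    Matrix.cons_val_zero, Matrix.cons_val_one, Matrix.head_cons, algebraMap_eq,
    map_one]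
  have key : ∀ A B H : MvPolynomial (Fin 2) ℝ,
      X 0 * A + (C (n : ℝ) + C 1) * (C e * X 0 ^ (n+1) * B) = C (D : ℝ) * H →
      A * (C e * X 0 ^ (n+1) + C dd * X 0 ^ (n+1)) +
        B * ((C (n : ℝ) + C 1) * X 0 ^ (2*n+1)
          + (C (n : ℝ) + C 1) * C dd * X 0 ^ n * (C e * X 0 ^ (n+1))) =
      (C e + C dd) * C (D : ℝ) * X 0 ^ n * H := by
    intro A B H hEE
    linear_combination ((C e + C dd) * X (0 : Fin 2) ^ n) * hEE
      - ((C (n : ℝ) + C 1) : MvPolynomial (Fin 2) ℝ) * X (0 : Fin 2) ^ (2*n+1) * B * he'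
  exact key _ _ _ hE
lemma wh_sub {w : Fin 2 → ℕ} {φ ψ : MvPolynomial (Fin 2) ℝ} {m : ℕ}
    (hφ : φ.IsWeightedHomogeneous w m) (hψ : ψ.IsWeightedHomogeneous w m) :
    (φ - ψ).IsWeightedHomogeneous w m := by
  intro d hd
  rw [coeff_sub] at hd
  rcases ne_or_eq (coeff d φ) 0 with h | h
  · exact hφ h
  · rcases ne_or_eq (coeff d ψ) 0 with h' | h'
    · exact hψ h'
    · exact absurd (by rw [h, h', sub_zero]) hd

lemma wh_pow {w : Fin 2 → ℕ} {φ : MvPolynomial (Fin 2) ℝ} {m : ℕ}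
    (hφ : φ.IsWeightedHomogeneous w m) (j : ℕ) :
    (φ ^ j).IsWeightedHomogeneous w (j * m) := by
  induction j with
  | zero => simpa using isWeightedHomogeneous_one ℝ w
  | succ j ih =>
      have := ih.mul hφ
      rw [← pow_succ] at this
      have harith : j * m + m = (j+1) * m := by ring
      rwa [harith] at this

lemma whX0pow (n m : ℕ) :
    ((X 0 : MvPolynomial (Fin 2) ℝ) ^ m).IsWeightedHomogeneous (wt n) m := by
  have := wh_pow (isWeightedHomogeneous_X ℝ (wt n) 0) m
  simpa [wt] using this

lemma whf1 (n : ℕ) :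
    ((X 1 - X 0 ^ (n+1) : MvPolynomial (Fin 2) ℝ)).IsWeightedHomogeneous (wt n) (n+1) := by
  refine wh_sub ?_ (whX0pow n (n+1))
  simpa [wt] using isWeightedHomogeneous_X ℝ (wt n) 1

lemma whf2 (n : ℕ) :
    ((X 1 + X 0 ^ (n+1) : MvPolynomial (Fin 2) ℝ)).IsWeightedHomogeneous (wt n) (n+1) := by
  refine IsWeightedHomogeneous.add ?_ (whX0pow n (n+1))
  simpa [wt] using isWeightedHomogeneous_X ℝ (wt n) 1

lemma f1_ne (n : ℕ) : (X 1 - X 0 ^ (n+1) : MvPolynomial (Fin 2) ℝ) ≠ 0 := by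
  intro h0
  have := congrArg (eval ![(0:ℝ), 1]) h0
  simp [zero_pow] at this

lemma f2_ne (n : ℕ) : (X 1 + X 0 ^ (n+1) : MvPolynomial (Fin 2) ℝ) ≠ 0 := by
  intro h0
  have := congrArg (eval ![(0:ℝ), 1]) h0
  simp [zero_pow] at this

lemma step (n D : ℕ) (dd e c : ℝ) (he : e * e = 1) {h : MvPolynomial (Fin 2) ℝ}
    (hh : h.IsWeightedHomogeneous (wt n) D)
    (hdvd : (X 1 - C e * X 0 ^ (n+1)) ∣
      (gradDot h (Pv n dd) (Qv n dd) + C c * X 0 ^ n * h))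
    (hc : (e + dd) * (D : ℝ) + c ≠ 0) :
    (X 1 - C e * X 0 ^ (n+1)) ∣ h := by
  have hu : aeval (![X 0, C e * X 0 ^ (n+1)] : Fin 2 → MvPolynomial (Fin 2) ℝ)
      (C e * X 0 ^ (n+1)) = C e * X 0 ^ (n+1) := by
    simp
  rw [dvd_iff_aeval _ _ hu] at hdvd ⊢
  rw [map_add, Sgrad n D dd e he hh] at hdvd
  simp only [map_mul, map_pow, aeval_X, aeval_C, algebraMap_eq,
    Matrix.cons_val_zero] at hdvd
  have hz : (C ((e + dd) * (D : ℝ) + c) : MvPolynomial (Fin 2) ℝ)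
      * (X 0 ^ n * aeval (![X 0, C e * X 0 ^ (n+1)] : Fin 2 → MvPolynomial (Fin 2) ℝ) h)
      = 0 := by
    rw [map_add, map_mul]
    linear_combination hdvd
  rcases mul_eq_zero.mp hz with hz1 | hz2
  · exact absurd (by rwa [← C_0, C_inj] at hz1) hc
  · rcases mul_eq_zero.mp hz2 with hz3 | hz4
    · exact absurd hz3 (pow_ne_zero _ (X_ne_zero 0))
    · exact hz4

lemma eig_prod (n : ℕ) (dd : ℝ) (a b : ℕ) :
    gradDot ((X 1 - X 0 ^ (n+1)) ^ a * (X 1 + X 0 ^ (n+1)) ^ b) (Pv n dd) (Qv n dd)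
    = C ((a : ℝ) * (-(((n : ℝ)+1) * (1 - dd))) + (b : ℝ) * (((n : ℝ)+1) * (1 + dd)))
      * X 0 ^ n * ((X 1 - X 0 ^ (n+1)) ^ a * (X 1 + X 0 ^ (n+1)) ^ b) := by
  rw [gradDot_mul, gradDot_pow_eigen (eig1 n dd) a, gradDot_pow_eigen (eig2 n dd) b]
  rw [show (C ((a : ℝ) * (-(((n : ℝ)+1) * (1 - dd))) + (b : ℝ) * (((n : ℝ)+1) * (1 + dd)))
      : MvPolynomial (Fin 2) ℝ)
      = C (a : ℝ) * C (-(((n : ℝ)+1) * (1 - dd))) + C (b : ℝ) * C (((n : ℝ)+1) * (1 + dd)) by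
    rw [map_add, map_mul, map_mul]]
  ring

end QHaux

open QHaux in
/-- Cyclicity of the co-ranges: `p·I_M` lies in the range of `ℓ_{k+M}` if and
only if `p` lies in the range of `ℓ_k`. -/
theorem corange_cyclicity
    (n m₁ m₂ : ℕ) (hn : 1 ≤ n) (hm₁ : 0 < m₁) (hm₂ : 0 < m₂)
    (hcop : Nat.Coprime m₁ m₂) (hne : m₁ ≠ m₂)
    (k : ℕ) (hk : n ≤ k)
    (p : MvPolynomial (Fin 2) ℝ) (hp : IsQH 1 (n + 1) k p) :
    (∃ q : MvPolynomial (Fin 2) ℝ, IsQH 1 (n + 1) (k + (n + 1) * (m₁ + m₂) - n) q ∧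
      gradDot q
        (X 1 + C (((m₁ : ℝ) - (m₂ : ℝ)) / ((m₁ : ℝ) + (m₂ : ℝ))) * X 0 ^ (n + 1))
        (C ((n : ℝ) + 1) * X 0 ^ (2 * n + 1)
          + C (((n : ℝ) + 1) * (((m₁ : ℝ) - (m₂ : ℝ)) / ((m₁ : ℝ) + (m₂ : ℝ))))
            * X 0 ^ n * X 1)
      = p * ((X 1 - X 0 ^ (n + 1)) ^ m₁ * (X 1 + X 0 ^ (n + 1)) ^ m₂)) ↔
    (∃ q' : MvPolynomial (Fin 2) ℝ, IsQH 1 (n + 1) (k - n) q' ∧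
      gradDot q'
        (X 1 + C (((m₁ : ℝ) - (m₂ : ℝ)) / ((m₁ : ℝ) + (m₂ : ℝ))) * X 0 ^ (n + 1))
        (C ((n : ℝ) + 1) * X 0 ^ (2 * n + 1)
          + C (((n : ℝ) + 1) * (((m₁ : ℝ) - (m₂ : ℝ)) / ((m₁ : ℝ) + (m₂ : ℝ))))
            * X 0 ^ n * X 1)
      = p) := by
  
  classical
  set dd : ℝ := ((m₁ : ℝ) - (m₂ : ℝ)) / ((m₁ : ℝ) + (m₂ : ℝ)) with hdd
  have hPv : (X 1 + C dd * X 0 ^ (n + 1) : MvPolynomial (Fin 2) ℝ) = Pv n dd := rfl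
  have hQv : (C ((n : ℝ) + 1) * X 0 ^ (2 * n + 1)
      + C (((n : ℝ) + 1) * dd) * X 0 ^ n * X 1 : MvPolynomial (Fin 2) ℝ) = Qv n dd := rfl
  rw [hPv, hQv]
  set f1 : MvPolynomial (Fin 2) ℝ := X 1 - X 0 ^ (n + 1) with hf1
  set f2 : MvPolynomial (Fin 2) ℝ := X 1 + X 0 ^ (n + 1) with hf2
  -- basic real number facts
  have hms : (m₁ : ℝ) + m₂ ≠ 0 := by positivity
  have h1d : (1 + dd) * ((m₁ : ℝ) + m₂) = 2 * m₁ := by rw [hdd]; field_simp; ring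
  have h2d : (1 - dd) * ((m₁ : ℝ) + m₂) = 2 * m₂ := by rw [hdd]; field_simp; ring
  have hdm : dd * ((m₁ : ℝ) + m₂) = (m₁ : ℝ) - m₂ := by rw [hdd]; field_simp
  have hI00 : (m₁ : ℝ) * (-(((n : ℝ)+1) * (1 - dd))) + (m₂ : ℝ) * (((n : ℝ)+1) * (1 + dd))
      = 0 := by linear_combination ((n : ℝ)+1) * hdm
  have hgradI : gradDot (f1 ^ m₁ * f2 ^ m₂) (Pv n dd) (Qv n dd) = 0 := by
    rw [hf1, hf2, eig_prod n dd m₁ m₂, hI00, map_zero, zero_mul, zero_mul]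
  have hp' := (isQH_iff n k p).mp hp
  constructor
  · -- forward direction
    rintro ⟨q, hqQH, hgrad⟩
    have hq' := (isQH_iff n _ q).mp hqQH
    -- Step A : f1 ^ j ∣ q for j ≤ m₁
    have stepA : ∀ j, j ≤ m₁ → f1 ^ j ∣ q := by
      intro j
      induction j with
      | zero => intro _; simpa using one_dvd q
      | succ j ih =>
        intro hj1
        obtain ⟨h, hqh⟩ := ih (by omega)
        have hjle : j * (n+1) ≤ (n+1) * (m₁ + m₂) := by
          calc j * (n+1) ≤ (m₁ + m₂) * (n+1) := Nat.mul_le_mul_right _ (by omega)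
          _ = (n+1) * (m₁ + m₂) := by ring
        set D := k + (n+1) * (m₁+m₂) - n - j * (n+1) with hD
        have hDsum : j * (n+1) + D = k + (n+1) * (m₁+m₂) - n := by
          rw [hD]
          set a := j * (n+1)
          set b := (n+1) * (m₁+m₂)
          omega
        have hwh_h : h.IsWeightedHomogeneous (wt n) D := by
          refine wh_cancel (wh_pow (whf1 n) j) (pow_ne_zero _ (f1_ne n)) ?_
          rw [show j * (n+1) + D = k + (n+1) * (m₁+m₂) - n from hDsum, ← hqh]
          exact hq'
        have hsplit : f1 ^ m₁ = f1 ^ j * f1 ^ (m₁ - j) := by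
          rw [← pow_add]; congr 1; omega
        have hgrad' := hgrad
        rw [hqh, gradDot_mul, gradDot_pow_eigen (hf1 ▸ eig1 n dd) j, hsplit] at hgrad'
        have hkey : f1 ^ j * (gradDot h (Pv n dd) (Qv n dd)
              + C ((j : ℝ) * (-(((n : ℝ)+1) * (1 - dd)))) * X 0 ^ n * h)
            = f1 ^ j * (f1 ^ (m₁ - j) * f2 ^ m₂ * p) := by
          rw [show (C ((j : ℝ) * (-(((n : ℝ)+1) * (1 - dd)))) : MvPolynomial (Fin 2) ℝ)
            = C (j : ℝ) * C (-(((n : ℝ)+1) * (1 - dd))) from map_mul C _ _]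
          linear_combination hgrad'
        have hbr := mul_left_cancel₀ (pow_ne_zero j (f1_ne n)) hkey
        have hdvd1 : (X 1 - C (1:ℝ) * X 0 ^ (n+1)) ∣ (gradDot h (Pv n dd) (Qv n dd)
            + C ((j : ℝ) * (-(((n : ℝ)+1) * (1 - dd)))) * X 0 ^ n * h) := by
          rw [hbr, show (X 1 - C (1:ℝ) * X 0 ^ (n+1) : MvPolynomial (Fin 2) ℝ) = f1 by
            rw [C_1, one_mul, hf1]]
          exact Dvd.dvd.mul_right (Dvd.dvd.mul_right (dvd_pow_self f1 (by omega)) _) _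
        have hcne : ((1:ℝ) + dd) * (D : ℝ) + (j : ℝ) * (-(((n : ℝ)+1) * (1 - dd))) ≠ 0 := by
          have hDr : (j : ℝ) * ((n : ℝ)+1) + (D : ℝ)
              = (k : ℝ) + ((n : ℝ)+1) * ((m₁ : ℝ) + m₂) - n := by
            have hc2 : ((j * (n+1) + D : ℕ) : ℝ) = ((k + (n+1) * (m₁+m₂) - n : ℕ) : ℝ) := by
              exact_mod_cast congrArg (Nat.cast (R := ℝ)) hDsum
            rw [Nat.cast_sub (by omega)] at hc2
            push_cast at hc2
            linarith
          intro h0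
          have e1 : (((1:ℝ) + dd) * (D : ℝ) + (j : ℝ) * (-(((n : ℝ)+1) * (1 - dd))))
                * ((m₁ : ℝ) + m₂)
              = 2 * ((m₁ : ℝ) * D - (j : ℝ) * ((n : ℝ)+1) * m₂) := by
            linear_combination (D : ℝ) * h1d - (j : ℝ) * ((n : ℝ)+1) * h2d
          rw [h0, zero_mul] at e1
          have hDval : (D : ℝ) = (k : ℝ) - n + ((n : ℝ)+1) * ((m₁ : ℝ)+m₂)
              - (j : ℝ) * ((n : ℝ)+1) := by linarith
          have hsw : (m₁ : ℝ) * D - (j : ℝ) * ((n : ℝ)+1) * m₂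
              = (m₁ : ℝ) * ((k : ℝ) - n)
                + ((n : ℝ)+1) * ((m₁ : ℝ)+m₂) * ((m₁ : ℝ) - j) := by
            rw [hDval]; ring
          have hkn : (n : ℝ) ≤ k := by exact_mod_cast hk
          have hjm : (j : ℝ) + 1 ≤ m₁ := by exact_mod_cast hj1
          have hpos1 : (0:ℝ) ≤ (m₁ : ℝ) * ((k : ℝ) - n) := by
            apply mul_nonneg (by positivity); linarith
          have hpos2 : (0:ℝ) < ((n : ℝ)+1) * ((m₁ : ℝ)+m₂) * ((m₁ : ℝ) - j) := by
            apply mul_pos (by positivity); linarith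
          linarith [hsw, e1]
        have hstep := step n D dd 1 ((j : ℝ) * (-(((n : ℝ)+1) * (1 - dd)))) (by norm_num)
          hwh_h hdvd1 hcne
        rw [show (X 1 - C (1:ℝ) * X 0 ^ (n+1) : MvPolynomial (Fin 2) ℝ) = f1 by
          rw [C_1, one_mul, hf1]] at hstep
        obtain ⟨h', hh'⟩ := hstep
        exact ⟨h', by rw [hqh, hh']; ring⟩
    -- Step B : f1 ^ m₁ * f2 ^ j ∣ q for j ≤ m₂
    have stepB : ∀ j, j ≤ m₂ → f1 ^ m₁ * f2 ^ j ∣ q := by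
      intro j
      induction j with
      | zero => intro _; simpa using stepA m₁ le_rfl
      | succ j ih =>
        intro hj1
        obtain ⟨h, hqh⟩ := ih (by omega)
        have hjle : (m₁ + j) * (n+1) ≤ (n+1) * (m₁ + m₂) := by
          calc (m₁ + j) * (n+1) ≤ (m₁ + m₂) * (n+1) := Nat.mul_le_mul_right _ (by omega)
          _ = (n+1) * (m₁ + m₂) := by ring
        set D := k + (n+1) * (m₁+m₂) - n - (m₁ + j) * (n+1) with hD
        have hDsum : (m₁ + j) * (n+1) + D = k + (n+1) * (m₁+m₂) - n := by
          rw [hD]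
          set a := (m₁ + j) * (n+1)
          set b := (n+1) * (m₁+m₂)
          omega
        have hwh_fg : (f1 ^ m₁ * f2 ^ j).IsWeightedHomogeneous (wt n) ((m₁ + j) * (n+1)) := by
          have := (wh_pow (whf1 n) m₁).mul (wh_pow (whf2 n) j)
          rwa [show m₁ * (n+1) + j * (n+1) = (m₁ + j) * (n+1) by ring] at this
        have hwh_h : h.IsWeightedHomogeneous (wt n) D := by
          refine wh_cancel hwh_fg
            (mul_ne_zero (pow_ne_zero _ (f1_ne n)) (pow_ne_zero _ (f2_ne n))) ?_
          rw [show (m₁ + j) * (n+1) + D = k + (n+1) * (m₁+m₂) - n from hDsum, ← hqh]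
          exact hq'
        have hsplit : f2 ^ m₂ = f2 ^ j * f2 ^ (m₂ - j) := by
          rw [← pow_add]; congr 1; omega
        have hgrad' := hgrad
        rw [hqh, gradDot_mul, hf1, hf2, eig_prod n dd m₁ j, ← hf1, ← hf2, hsplit] at hgrad'
        have hkey : (f1 ^ m₁ * f2 ^ j) * (gradDot h (Pv n dd) (Qv n dd)
              + C ((m₁ : ℝ) * (-(((n : ℝ)+1) * (1 - dd)))
                  + (j : ℝ) * (((n : ℝ)+1) * (1 + dd))) * X 0 ^ n * h)
            = (f1 ^ m₁ * f2 ^ j) * (f2 ^ (m₂ - j) * p) := by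
          rw [show (C ((m₁ : ℝ) * (-(((n : ℝ)+1) * (1 - dd)))
                + (j : ℝ) * (((n : ℝ)+1) * (1 + dd))) : MvPolynomial (Fin 2) ℝ)
              = C (m₁ : ℝ) * C (-(((n : ℝ)+1) * (1 - dd)))
                + C (j : ℝ) * C (((n : ℝ)+1) * (1 + dd)) by
            rw [map_add, map_mul, map_mul]] at hgrad' ⊢
          linear_combination hgrad'
        have hbr := mul_left_cancel₀
          (mul_ne_zero (pow_ne_zero _ (f1_ne n)) (pow_ne_zero _ (f2_ne n))) hkey
        have hdvd1 : (X 1 - C (-1:ℝ) * X 0 ^ (n+1)) ∣ (gradDot h (Pv n dd) (Qv n dd)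
            + C ((m₁ : ℝ) * (-(((n : ℝ)+1) * (1 - dd)))
                + (j : ℝ) * (((n : ℝ)+1) * (1 + dd))) * X 0 ^ n * h) := by
          rw [hbr, show (X 1 - C (-1:ℝ) * X 0 ^ (n+1) : MvPolynomial (Fin 2) ℝ) = f2 by
            rw [map_neg, C_1, hf2]; ring]
          exact Dvd.dvd.mul_right (dvd_pow_self f2 (by omega)) _
        have hcne : ((-1:ℝ) + dd) * (D : ℝ) + ((m₁ : ℝ) * (-(((n : ℝ)+1) * (1 - dd)))
            + (j : ℝ) * (((n : ℝ)+1) * (1 + dd))) ≠ 0 := by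
          have hDr : ((m₁ : ℝ) + j) * ((n : ℝ)+1) + (D : ℝ)
              = (k : ℝ) + ((n : ℝ)+1) * ((m₁ : ℝ) + m₂) - n := by
            have hc2 : (((m₁ + j) * (n+1) + D : ℕ) : ℝ)
                = ((k + (n+1) * (m₁+m₂) - n : ℕ) : ℝ) := by
              exact_mod_cast congrArg (Nat.cast (R := ℝ)) hDsum
            rw [Nat.cast_sub (by omega)] at hc2
            push_cast at hc2
            linarith
          intro h0
          have e1 : (((-1:ℝ) + dd) * (D : ℝ) + ((m₁ : ℝ) * (-(((n : ℝ)+1) * (1 - dd)))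
                + (j : ℝ) * (((n : ℝ)+1) * (1 + dd)))) * ((m₁ : ℝ) + m₂)
              = -2 * ((m₂ : ℝ) * D + ((n : ℝ)+1) * m₁ * m₂ - (j : ℝ) * ((n : ℝ)+1) * m₁) := by
            linear_combination (-(D : ℝ) - (m₁ : ℝ) * ((n : ℝ)+1)) * h2d
              + (j : ℝ) * ((n : ℝ)+1) * h1d
          rw [h0, zero_mul] at e1
          have hDval : (D : ℝ) = (k : ℝ) - n + ((n : ℝ)+1) * ((m₁ : ℝ)+m₂)
              - ((m₁ : ℝ) + j) * ((n : ℝ)+1) := by linarith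
          have hsw : (m₂ : ℝ) * D + ((n : ℝ)+1) * m₁ * m₂ - (j : ℝ) * ((n : ℝ)+1) * m₁
              = (m₂ : ℝ) * ((k : ℝ) - n)
                + ((n : ℝ)+1) * ((m₁ : ℝ)+m₂) * ((m₂ : ℝ) - j) := by
            rw [hDval]; ring
          have hkn : (n : ℝ) ≤ k := by exact_mod_cast hk
          have hjm : (j : ℝ) + 1 ≤ m₂ := by exact_mod_cast hj1
          have hpos1 : (0:ℝ) ≤ (m₂ : ℝ) * ((k : ℝ) - n) := by
            apply mul_nonneg (by positivity); linarith
          have hpos2 : (0:ℝ) < ((n : ℝ)+1) * ((m₁ : ℝ)+m₂) * ((m₂ : ℝ) - j) := by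
            apply mul_pos (by positivity); linarith
          linarith [hsw, e1]
        have hstep := step n D dd (-1) ((m₁ : ℝ) * (-(((n : ℝ)+1) * (1 - dd)))
            + (j : ℝ) * (((n : ℝ)+1) * (1 + dd))) (by norm_num) hwh_h hdvd1 hcne
        rw [show (X 1 - C (-1:ℝ) * X 0 ^ (n+1) : MvPolynomial (Fin 2) ℝ) = f2 by
          rw [map_neg, C_1, hf2]; ring] at hstep
        obtain ⟨h', hh'⟩ := hstep
        exact ⟨h', by rw [hqh, hh']; ring⟩
    -- conclude the forward direction
    obtain ⟨q', hqq'⟩ := stepB m₂ le_rfl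
    refine ⟨q', ?_, ?_⟩
    · rw [isQH_iff]
      have hMk : (m₁ * (n+1) + m₂ * (n+1)) + (k - n) = k + (n+1) * (m₁+m₂) - n := by
        have : m₁ * (n+1) + m₂ * (n+1) = (n+1) * (m₁+m₂) := by ring
        rw [this]
        set b := (n+1) * (m₁+m₂)
        omega
      refine wh_cancel ((wh_pow (whf1 n) m₁).mul (wh_pow (whf2 n) m₂))
        (mul_ne_zero (pow_ne_zero _ (f1_ne n)) (pow_ne_zero _ (f2_ne n))) ?_
      rw [hMk, ← hqq']
      exact hq'
    · have hgrad' := hgrad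
      rw [hqq', gradDot_mul, hgradI] at hgrad'
      have hcan : (f1 ^ m₁ * f2 ^ m₂) * gradDot q' (Pv n dd) (Qv n dd)
          = (f1 ^ m₁ * f2 ^ m₂) * p := by linear_combination hgrad'
      exact mul_left_cancel₀
        (mul_ne_zero (pow_ne_zero _ (f1_ne n)) (pow_ne_zero _ (f2_ne n))) hcan
  · -- reverse direction
    rintro ⟨q', hq'QH, hgrad⟩
    refine ⟨f1 ^ m₁ * f2 ^ m₂ * q', ?_, ?_⟩
    · rw [isQH_iff]
      have hq'' := (isQH_iff n _ q').mp hq'QH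
      have := ((wh_pow (whf1 n) m₁).mul (wh_pow (whf2 n) m₂)).mul hq''
      have hMk : (m₁ * (n+1) + m₂ * (n+1)) + (k - n) = k + (n+1) * (m₁+m₂) - n := by
        have h2 : m₁ * (n+1) + m₂ * (n+1) = (n+1) * (m₁+m₂) := by ring
        rw [h2]
        set b := (n+1) * (m₁+m₂)
        omega
      rwa [hMk] at this
    · rw [gradDot_mul, hgradI, hgrad]
      ring
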